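/- In the modified Laplace matrix model, assume additionally that ‖P_{Ω_X}(Θ − X)‖_F ≤ ρ₀√s for some constant ρ₀ ≥ 0, where s = |Ω_X|, and let γ ∈ (0,1). Then with probability at least 1 − γ, ρ := ‖P_{Ω_Z}(Θ − Z)‖_F ≤ ρ₀√s + (4/ε)·√(s/γ) + √( (2mn/((e^{ε/2}+1)γ)) · (1 + 8/ε²) ). -/

import Mathlib

open MeasureTheory Real

/-- Measurable space structure on `Option α`, via the equivalence with `α ⊕ PUnit`. -/
instance instMeasurableSpaceOption {α : Type u_1} [MeasurableSpace α] :
    MeasurableSpace (Option α) :=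
  MeasurableSpace.comap (Equiv.optionEquivSumPUnit.{0, u_1} α) inferInstance

/-- The Laplace distribution with location `c` and scale `2/ε`,
given by the density `t ↦ (ε/4) * exp (-ε * |t - c| / 2)`. -/
noncomputable def laplaceMeasure (ε c : ℝ) : Measure ℝ :=
  volume.withDensity fun t => ENNReal.ofReal (ε / 4 * Real.exp (-(ε * |t - c|) / 2))

/-- The modified Laplace mechanism on a single rating.  `none` is the missing rating `?`.
A present rating `x` is sent to `x + ξ` with probability `e^{ε/2}/(e^{ε/2}+1)` and to `?`
otherwise; a missing rating is sent to `?` with probability `e^{ε/2}/(e^{ε/2}+1)` and to `ξ`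
otherwise, where `ξ ~ Laplace(0, 2/ε)`. -/
noncomputable def modLaplace (ε : ℝ) (x : Option ℝ) : Measure (Option ℝ) :=
  match x with
  | some r =>
      ENNReal.ofReal (Real.exp (ε / 2) / (Real.exp (ε / 2) + 1)) •
          (laplaceMeasure ε r).map Option.some +
        ENNReal.ofReal (1 / (Real.exp (ε / 2) + 1)) • Measure.dirac (none : Option ℝ)
  | none =>
      ENNReal.ofReal (Real.exp (ε / 2) / (Real.exp (ε / 2) + 1)) •
          Measure.dirac (none : Option ℝ) +
        ENNReal.ofReal (1 / (Real.exp (ε / 2) + 1)) • (laplaceMeasure ε 0).map Option.some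

/-- Distribution of the matrix `Z` obtained by applying the modified Laplace mechanism
independently to every entry of the partially observed rating matrix `X`
(`none` encodes a missing entry). -/
noncomputable def modLaplaceMatrix (ε : ℝ) {m n : ℕ} (X : Fin m × Fin n → Option ℝ) :
    Measure (Fin m × Fin n → Option ℝ) :=
  Measure.pi fun p => modLaplace ε (X p)

/-- Support of the non-missing entries of a partially observed matrix. -/
def suppOf {m n : ℕ} (A : Fin m × Fin n → Option ℝ) : Finset (Fin m × Fin n) :=
  Finset.univ.filter fun p => (A p).isSome

open Set

variable {ε : ℝ}

lemma measurable_opt_some : Measurable (Option.some : ℝ → Option ℝ) := by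
  intro s hs
  obtain ⟨t, ht, rfl⟩ := hs
  have h : (Option.some : ℝ → Option ℝ) ⁻¹' ((Equiv.optionEquivSumPUnit ℝ) ⁻¹' t)
      = Sum.inl ⁻¹' t := rfl
  rw [h]
  exact measurable_inl ht

lemma measurable_optElim (c : ENNReal) {f : ℝ → ENNReal} (hf : Measurable f) :
    Measurable (fun o : Option ℝ => o.elim c f) := by
  have heq : (fun o : Option ℝ => o.elim c f)
      = (Sum.elim f fun _ : PUnit => c) ∘ (Equiv.optionEquivSumPUnit ℝ) := by
    funext o; cases o <;> rfl
  rw [heq]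
  exact (hf.sumElim measurable_const).comp (measurable_iff_comap_le.mpr le_rfl)

lemma integrableOn_pow_exp {a : ℝ} (ha : 0 < a) (k : ℕ) :
    IntegrableOn (fun x : ℝ => x ^ k * Real.exp (-(a * x))) (Set.Ioi 0) := by
  have h := integrableOn_rpow_mul_exp_neg_mul_rpow (s := (k : ℝ)) (p := 1)
    (by exact_mod_cast neg_one_lt_zero.trans_le (Nat.cast_nonneg (α := ℝ) k)) one_pos ha
  refine h.congr_fun (fun x hx => ?_) measurableSet_Ioi
  beta_reduce
  rw [Real.rpow_one, Real.rpow_natCast, neg_mul]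

lemma integral_pow_exp {a : ℝ} (ha : 0 < a) (k : ℕ) :
    ∫ x in Set.Ioi (0:ℝ), x ^ k * Real.exp (-(a * x)) = (1/a) ^ (k+1) * (Nat.factorial k) := by
  have h := integral_rpow_mul_exp_neg_mul_Ioi (a := (k:ℝ)+1) (r := a) (by positivity) ha
  rw [show ((k:ℝ) + 1 - 1) = (k:ℝ) by ring] at h
  rw [show (∫ x in Set.Ioi (0:ℝ), x ^ k * Real.exp (-(a * x)))
      = ∫ t in Set.Ioi (0:ℝ), t ^ (k:ℝ) * Real.exp (-(a * t)) from
    setIntegral_congr_fun measurableSet_Ioi (fun x _ => by rw [Real.rpow_natCast])]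
  rw [h, Real.Gamma_nat_eq_factorial,
    show ((k:ℝ) + 1) = ((k+1 : ℕ) : ℝ) by push_cast; ring, Real.rpow_natCast]

lemma integrable_abs_comp {f : ℝ → ℝ} (hf : IntegrableOn f (Set.Ioi 0)) :
    Integrable fun x : ℝ => f |x| := by
  have int_Ioi : IntegrableOn (fun x ↦ f |x|) (Ioi 0) :=
    hf.congr_fun (fun x hx => by rw [abs_of_pos hx]) measurableSet_Ioi |>.congr_fun
      (fun x hx => rfl) measurableSet_Ioi
  have int_Iic : IntegrableOn (fun x ↦ f |x|) (Iic 0) := by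
    rw [← Measure.map_neg_eq_self (volume : Measure ℝ)]
    have m : MeasurableEmbedding fun x : ℝ => -x := (Homeomorph.neg ℝ).measurableEmbedding
    rw [m.integrableOn_map_iff]
    simp_rw [Function.comp_def, abs_neg, Set.neg_preimage, Set.neg_Iic, neg_zero]
    exact (integrableOn_Ici_iff_integrableOn_Ioi).mpr int_Ioi
  have h := int_Iic.union int_Ioi
  rwa [Iic_union_Ioi, integrableOn_univ] at h

lemma integrable_pow_exp_abs {a : ℝ} (ha : 0 < a) (k : ℕ) :
    Integrable fun x : ℝ => x ^ k * Real.exp (-(a * |x|)) := by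
  have h1 : Integrable fun x : ℝ => |x| ^ k * Real.exp (-(a * |x|)) := by
    have := integrable_abs_comp (f := fun x : ℝ => x ^ k * Real.exp (-(a * x)))
      (integrableOn_pow_exp ha k)
    exact this
  refine h1.mono' ?_ (Filter.Eventually.of_forall fun x => ?_)
  · exact ((measurable_id.pow_const k).mul
      ((measurable_abs.const_mul a).neg.exp)).aestronglyMeasurable
  · rw [Real.norm_eq_abs, abs_mul, abs_pow, abs_of_pos (Real.exp_pos _)]

lemma integral_exp_abs {a : ℝ} (ha : 0 < a) :
    ∫ x : ℝ, Real.exp (-(a * |x|)) = 2 / a := by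
  rw [show (∫ x : ℝ, Real.exp (-(a * |x|)))
      = 2 * ∫ x in Set.Ioi (0:ℝ), Real.exp (-(a * x)) from
    integral_comp_abs (f := fun x => Real.exp (-(a * x)))]
  have h := integral_pow_exp ha 0
  simp only [pow_zero, one_mul, pow_one, Nat.factorial_zero, Nat.cast_one, mul_one] at h
  rw [h]; ring

lemma integral_sq_exp_abs {a : ℝ} (ha : 0 < a) :
    ∫ x : ℝ, x ^ 2 * Real.exp (-(a * |x|)) = 4 / a ^ 3 := by
  rw [show (fun x : ℝ => x ^ 2 * Real.exp (-(a * |x|)))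
      = fun x : ℝ => (fun y : ℝ => y ^ 2 * Real.exp (-(a * y))) |x| from
    funext fun x => by simp only []; rw [← sq_abs]]
  rw [integral_comp_abs (f := fun y : ℝ => y ^ 2 * Real.exp (-(a * y))), integral_pow_exp ha 2]
  rw [Nat.factorial_two]
  have ha' : a ≠ 0 := ha.ne'
  rw [div_pow, one_pow]
  field_simp; ring

lemma integral_id_exp_abs {a : ℝ} (ha : 0 < a) :
    ∫ x : ℝ, x * Real.exp (-(a * |x|)) = 0 := by
  have key : ∫ x : ℝ, x * Real.exp (-(a * |x|))
      = ∫ x : ℝ, (-x) * Real.exp (-(a * |(-x)|)) := by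
    conv_lhs => rw [← Measure.map_neg_eq_self (volume : Measure ℝ)]
    exact (Homeomorph.neg ℝ).measurableEmbedding.integral_map
      (g := fun x : ℝ => x * Real.exp (-(a * |x|)))
  simp only [abs_neg, neg_mul] at key
  rw [integral_neg] at key
  linarith
variable {ε : ℝ}

lemma density_rw (c : ℝ) : (fun x : ℝ => ε / 4 * Real.exp (-(ε * |x - c|) / 2))
    = fun x : ℝ => ε / 4 * Real.exp (-(ε / 2 * |x - c|)) := by
  funext x; congr 1; ring_nf

lemma integrable_density (hε : 0 < ε) (c : ℝ) :
    Integrable fun x : ℝ => ε / 4 * Real.exp (-(ε * |x - c|) / 2) := by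
  rw [density_rw]
  have h0 : Integrable fun u : ℝ => Real.exp (-(ε / 2 * |u|)) := by
    simpa using integrable_pow_exp_abs (half_pos hε) 0
  exact (h0.const_mul (ε / 4)).comp_sub_right c

lemma integral_density (hε : 0 < ε) (c : ℝ) :
    ∫ x : ℝ, ε / 4 * Real.exp (-(ε * |x - c|) / 2) = 1 := by
  rw [density_rw]
  rw [integral_sub_right_eq_self (μ := volume)
    (fun u : ℝ => ε / 4 * Real.exp (-(ε / 2 * |u|))) c]
  rw [integral_const_mul _ _, integral_exp_abs (half_pos hε)]
  have hε' : ε ≠ 0 := hε.ne'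
  field_simp
  ring

lemma integrable_sq_density (hε : 0 < ε) (c b : ℝ) :
    Integrable fun x : ℝ => ε / 4 * Real.exp (-(ε * |x - c|) / 2) * (b - x) ^ 2 := by
  rw [show (fun x : ℝ => ε / 4 * Real.exp (-(ε * |x - c|) / 2) * (b - x) ^ 2)
      = fun x : ℝ => (fun u : ℝ => ε / 4 * Real.exp (-(ε / 2 * |u|)) * ((b - c) - u) ^ 2) (x - c)
      from funext fun x => by simp only []; rw [show b - c - (x - c) = b - x by ring]; congr 2; ring]
  have ha := half_pos hε
  have key : Integrable fun u : ℝ =>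
      ε / 4 * ((b-c)^2 * Real.exp (-(ε/2 * |u|)) - (2*(b-c)) * (u * Real.exp (-(ε/2 * |u|)))
        + u^2 * Real.exp (-(ε/2 * |u|))) := by
    refine Integrable.const_mul ?_ _
    refine Integrable.add (Integrable.sub ?_ ?_) ?_
    · exact Integrable.const_mul (by simpa using integrable_pow_exp_abs ha 0) _
    · exact Integrable.const_mul (by simpa using integrable_pow_exp_abs ha 1) _
    · exact integrable_pow_exp_abs ha 2
  refine Integrable.comp_sub_right (f := fun u : ℝ => ε / 4 * Real.exp (-(ε / 2 * |u|)) * ((b - c) - u) ^ 2) ?_ c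
  refine key.congr (Filter.Eventually.of_forall fun u => ?_)
  show _ = ε / 4 * Real.exp (-(ε / 2 * |u|)) * ((b - c) - u) ^ 2
  ring

lemma integral_sq_density (hε : 0 < ε) (c b : ℝ) :
    ∫ x : ℝ, ε / 4 * Real.exp (-(ε * |x - c|) / 2) * (b - x) ^ 2
      = (b - c) ^ 2 + 8 / ε ^ 2 := by
  have ha := half_pos hε
  rw [show (fun x : ℝ => ε / 4 * Real.exp (-(ε * |x - c|) / 2) * (b - x) ^ 2)
      = fun x : ℝ => (fun u : ℝ => ε / 4 * Real.exp (-(ε / 2 * |u|)) * ((b - c) - u) ^ 2) (x - c)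
      from funext fun x => by simp only []; rw [show b - c - (x - c) = b - x by ring]; congr 2; ring]
  rw [integral_sub_right_eq_self (μ := volume)
    (fun u : ℝ => ε / 4 * Real.exp (-(ε / 2 * |u|)) * ((b - c) - u) ^ 2) c]
  set d := b - c with hd
  have e0 : Integrable fun u : ℝ => d^2 * Real.exp (-(ε/2 * |u|)) :=
    Integrable.const_mul (by simpa using integrable_pow_exp_abs ha 0) _
  have e1 : Integrable fun u : ℝ => (2*d) * (u * Real.exp (-(ε/2 * |u|))) :=
    Integrable.const_mul (by simpa using integrable_pow_exp_abs ha 1) _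
  have e2 : Integrable fun u : ℝ => u^2 * Real.exp (-(ε/2 * |u|)) :=
    integrable_pow_exp_abs ha 2
  rw [show (fun u : ℝ => ε / 4 * Real.exp (-(ε / 2 * |u|)) * (d - u) ^ 2)
      = fun u : ℝ => ε / 4 * (d^2 * Real.exp (-(ε/2 * |u|))
          - (2*d) * (u * Real.exp (-(ε/2 * |u|))) + u^2 * Real.exp (-(ε/2 * |u|)))
      from funext fun u => by ring]
  have hsub : Integrable fun u : ℝ => d^2 * Real.exp (-(ε/2 * |u|))
      - (2*d) * (u * Real.exp (-(ε/2 * |u|))) := e0.sub e1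
  rw [integral_const_mul _ _, integral_add hsub e2, integral_sub e0 e1,
    integral_const_mul _ _, integral_const_mul _ _,
    integral_exp_abs ha, integral_id_exp_abs ha, integral_sq_exp_abs ha]
  have hε' : ε ≠ 0 := hε.ne'
  field_simp
  ring
lemma measurable_laplace_density (ε c : ℝ) :
    Measurable fun x : ℝ => ENNReal.ofReal (ε / 4 * Real.exp (-(ε * |x - c|) / 2)) := by
  apply Measurable.ennreal_ofReal
  exact (((((measurable_id.sub_const c).abs.const_mul ε).neg).div_const 2).exp).const_mul (ε/4)

lemma laplace_univ (hε : 0 < ε) (c : ℝ) : laplaceMeasure ε c Set.univ = 1 := by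
  rw [laplaceMeasure, withDensity_apply _ MeasurableSet.univ, Measure.restrict_univ,
    ← ofReal_integral_eq_lintegral_ofReal (integrable_density hε c)
      (Filter.Eventually.of_forall fun x => by positivity),
    integral_density hε c, ENNReal.ofReal_one]

lemma laplace_prob (hε : 0 < ε) (c : ℝ) : IsProbabilityMeasure (laplaceMeasure ε c) :=
  ⟨laplace_univ hε c⟩

lemma lap_lintegral_sq (hε : 0 < ε) (c b : ℝ) :
    ∫⁻ x, ENNReal.ofReal ((b - x) ^ 2) ∂(laplaceMeasure ε c)
      = ENNReal.ofReal ((b - c) ^ 2 + 8 / ε ^ 2) := by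
  have hg : Measurable fun x : ℝ => ENNReal.ofReal ((b - x) ^ 2) :=
    ((measurable_const.sub measurable_id).pow_const 2).ennreal_ofReal
  rw [laplaceMeasure, lintegral_withDensity_eq_lintegral_mul _ (measurable_laplace_density ε c) hg]
  have h : ∀ x : ℝ, (ENNReal.ofReal (ε / 4 * Real.exp (-(ε * |x - c|) / 2))
      * ENNReal.ofReal ((b - x) ^ 2))
      = ENNReal.ofReal (ε / 4 * Real.exp (-(ε * |x - c|) / 2) * (b - x) ^ 2) := fun x =>
    (ENNReal.ofReal_mul (by positivity)).symm
  calc ∫⁻ x, (fun x => ENNReal.ofReal (ε / 4 * Real.exp (-(ε * |x - c|) / 2))) x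
        * (fun x => ENNReal.ofReal ((b - x) ^ 2)) x
      = ∫⁻ x, ENNReal.ofReal (ε / 4 * Real.exp (-(ε * |x - c|) / 2) * (b - x) ^ 2) := by
        simp only []; simp_rw [h]
    _ = ENNReal.ofReal (∫ x, ε / 4 * Real.exp (-(ε * |x - c|) / 2) * (b - x) ^ 2) :=
        (ofReal_integral_eq_lintegral_ofReal (integrable_sq_density hε c b)
          (Filter.Eventually.of_forall fun x => by positivity)).symm
    _ = ENNReal.ofReal ((b - c) ^ 2 + 8 / ε ^ 2) := by rw [integral_sq_density hε c b]
lemma weights_sum (hε : 0 < ε) :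
    ENNReal.ofReal (Real.exp (ε / 2) / (Real.exp (ε / 2) + 1))
      + ENNReal.ofReal (1 / (Real.exp (ε / 2) + 1)) = 1 := by
  have hpos : (0:ℝ) < Real.exp (ε / 2) + 1 := by positivity
  rw [← ENNReal.ofReal_add (by positivity) (by positivity),
    show Real.exp (ε / 2) / (Real.exp (ε / 2) + 1) + 1 / (Real.exp (ε / 2) + 1) = 1 by
      field_simp, ENNReal.ofReal_one]

lemma modLaplace_lintegral_some (hε : 0 < ε) (r : ℝ) {g : Option ℝ → ENNReal}
    (hg : Measurable g) :
    ∫⁻ o, g o ∂(modLaplace ε (some r))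
      = ENNReal.ofReal (Real.exp (ε / 2) / (Real.exp (ε / 2) + 1))
          * ∫⁻ z, g (some z) ∂(laplaceMeasure ε r)
        + ENNReal.ofReal (1 / (Real.exp (ε / 2) + 1)) * g none := by
  simp only [modLaplace]
  rw [lintegral_add_measure, lintegral_smul_measure, lintegral_smul_measure,
    lintegral_map hg measurable_opt_some, lintegral_dirac' _ hg]
  simp only [smul_eq_mul]

lemma modLaplace_lintegral_none (hε : 0 < ε) {g : Option ℝ → ENNReal}
    (hg : Measurable g) :
    ∫⁻ o, g o ∂(modLaplace ε none)
      = ENNReal.ofReal (Real.exp (ε / 2) / (Real.exp (ε / 2) + 1)) * g none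
        + ENNReal.ofReal (1 / (Real.exp (ε / 2) + 1))
          * ∫⁻ z, g (some z) ∂(laplaceMeasure ε 0) := by
  simp only [modLaplace]
  rw [lintegral_add_measure, lintegral_smul_measure, lintegral_smul_measure,
    lintegral_map hg measurable_opt_some, lintegral_dirac' _ hg]
  simp only [smul_eq_mul]

lemma modLaplace_prob (hε : 0 < ε) (x : Option ℝ) :
    IsProbabilityMeasure (modLaplace ε x) := by
  constructor
  cases x with
  | none =>
      simp only [modLaplace, Measure.coe_add, Pi.add_apply, Measure.smul_apply, smul_eq_mul]
      rw [Measure.map_apply measurable_opt_some MeasurableSet.univ, Set.preimage_univ,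
        laplace_univ hε, measure_univ, mul_one, mul_one, weights_sum hε]
  | some r =>
      simp only [modLaplace, Measure.coe_add, Pi.add_apply, Measure.smul_apply, smul_eq_mul]
      rw [Measure.map_apply measurable_opt_some MeasurableSet.univ, Set.preimage_univ,
        laplace_univ hε, measure_univ, mul_one, mul_one, weights_sum hε]

lemma pi_map_eval {ι : Type*} [Fintype ι] {α : ι → Type*} [∀ i, MeasurableSpace (α i)]
    (ν : ∀ i, Measure (α i)) [∀ i, IsProbabilityMeasure (ν i)] (i : ι) :
    (Measure.pi ν).map (Function.eval i) = ν i := by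
  classical
  ext s hs
  rw [Measure.map_apply (measurable_pi_apply i) hs, Set.eval_preimage, Measure.pi_pi]
  rw [Finset.prod_eq_single i (fun j _ hj => by rw [Function.update_of_ne hj]; exact measure_univ)
    (fun h => absurd (Finset.mem_univ i) h)]
  rw [Function.update_self]

lemma lintegral_eval_pi {ι : Type*} [Fintype ι] {α : ι → Type*} [∀ i, MeasurableSpace (α i)]
    (ν : ∀ i, Measure (α i)) [∀ i, IsProbabilityMeasure (ν i)] (i : ι)
    {g : α i → ENNReal} (hg : Measurable g) :
    ∫⁻ x, g (x i) ∂(Measure.pi ν) = ∫⁻ y, g y ∂(ν i) := by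
  rw [← pi_map_eval ν i, lintegral_map hg (measurable_pi_apply i)]

lemma sqrt_add_le'' {x y : ℝ} (hx : 0 ≤ x) (hy : 0 ≤ y) :
    Real.sqrt (x + y) ≤ Real.sqrt x + Real.sqrt y := by
  have h : x + y ≤ (Real.sqrt x + Real.sqrt y) ^ 2 := by
    nlinarith [Real.sq_sqrt hx, Real.sq_sqrt hy, Real.sqrt_nonneg x, Real.sqrt_nonneg y,
      mul_nonneg (Real.sqrt_nonneg x) (Real.sqrt_nonneg y)]
  calc Real.sqrt (x + y) ≤ Real.sqrt ((Real.sqrt x + Real.sqrt y) ^ 2) := Real.sqrt_le_sqrt h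
    _ = Real.sqrt x + Real.sqrt y := Real.sqrt_sq (by positivity)

lemma minkowski_finset {ι : Type*} (s : Finset ι) (f g : ι → ℝ) :
    Real.sqrt (∑ i ∈ s, (f i + g i) ^ 2)
      ≤ Real.sqrt (∑ i ∈ s, f i ^ 2) + Real.sqrt (∑ i ∈ s, g i ^ 2) := by
  set A := Real.sqrt (∑ i ∈ s, f i ^ 2) with hA
  set B := Real.sqrt (∑ i ∈ s, g i ^ 2) with hB
  have hA2 : (∑ i ∈ s, f i ^ 2) = A ^ 2 :=
    (Real.sq_sqrt (Finset.sum_nonneg fun i _ => sq_nonneg _)).symm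
  have hB2 : (∑ i ∈ s, g i ^ 2) = B ^ 2 :=
    (Real.sq_sqrt (Finset.sum_nonneg fun i _ => sq_nonneg _)).symm
  have hCS : ∑ i ∈ s, f i * g i ≤ A * B := by
    calc ∑ i ∈ s, f i * g i ≤ |∑ i ∈ s, f i * g i| := le_abs_self _
      _ = Real.sqrt ((∑ i ∈ s, f i * g i) ^ 2) := (Real.sqrt_sq_eq_abs _).symm
      _ ≤ Real.sqrt ((∑ i ∈ s, f i ^ 2) * ∑ i ∈ s, g i ^ 2) :=
          Real.sqrt_le_sqrt (Finset.sum_mul_sq_le_sq_mul_sq s f g)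
      _ = A * B := by
          rw [Real.sqrt_mul (Finset.sum_nonneg fun i _ => sq_nonneg _)]
  have hsum : ∑ i ∈ s, (f i + g i) ^ 2
      = (∑ i ∈ s, f i ^ 2) + 2 * (∑ i ∈ s, f i * g i) + (∑ i ∈ s, g i ^ 2) := by
    rw [Finset.mul_sum, ← Finset.sum_add_distrib, ← Finset.sum_add_distrib]
    exact Finset.sum_congr rfl fun i _ => by ring
  have key : ∑ i ∈ s, (f i + g i) ^ 2 ≤ (A + B) ^ 2 := by nlinarith
  calc Real.sqrt (∑ i ∈ s, (f i + g i) ^ 2) ≤ Real.sqrt ((A + B) ^ 2) := Real.sqrt_le_sqrt key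
    _ = A + B := Real.sqrt_sq (by positivity)
/-- Modified Laplace matrix model: if `‖P_{Ω_X}(Θ − X)‖_F ≤ ρ₀√s` with `s = |Ω_X|`, then for
any `γ ∈ (0,1)`, with probability at least `1 − γ`,
`‖P_{Ω_Z}(Θ − Z)‖_F ≤ ρ₀√s + (4/ε)√(s/γ) + √((2mn/((e^{ε/2}+1)γ))(1 + 8/ε²))`. -/
theorem modLaplace_observation_error_bound (ε : ℝ) (hε : 0 < ε) (m n : ℕ)
    (Θ : Fin m × Fin n → ℝ) (hΘ : ∀ p, Θ p ∈ Set.Icc (-1 : ℝ) 1)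
    (X : Fin m × Fin n → Option ℝ)
    (hX : ∀ p, ∀ r : ℝ, X p = some r → r ∈ Set.Icc (-1 : ℝ) 1)
    (ρ₀ : ℝ) (hρ₀ : 0 ≤ ρ₀)
    (hclose : Real.sqrt (∑ p ∈ suppOf X, (Θ p - (X p).getD 0) ^ 2) ≤
      ρ₀ * Real.sqrt ((suppOf X).card))
    (γ : ℝ) (hγ : γ ∈ Set.Ioo (0 : ℝ) 1) :
    ENNReal.ofReal (1 - γ) ≤
      modLaplaceMatrix ε X
        {Z | Real.sqrt (∑ p ∈ suppOf Z, (Θ p - (Z p).getD 0) ^ 2) ≤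
          ρ₀ * Real.sqrt ((suppOf X).card) +
            4 / ε * Real.sqrt ((suppOf X).card / γ) +
            Real.sqrt (2 * (m * n : ℝ) / ((Real.exp (ε / 2) + 1) * γ) * (1 + 8 / ε ^ 2))} := by

  classical
  obtain ⟨hγ0, hγ1⟩ := hγ
  haveI hprob : ∀ p : Fin m × Fin n, IsProbabilityMeasure (modLaplace ε (X p)) :=
    fun p => modLaplace_prob hε (X p)
  set μ := modLaplaceMatrix ε X with hμdef
  have hμpi : μ = Measure.pi (fun p => modLaplace ε (X p)) := rfl
  haveI : IsProbabilityMeasure μ := by rw [hμpi]; infer_instance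
  set s : ℕ := (suppOf X).card with hs
  set TA : ℝ := 16 * s / (ε ^ 2 * γ) with hTA
  set TB : ℝ := 2 * (m * n : ℝ) / ((Real.exp (ε / 2) + 1) * γ) * (1 + 8 / ε ^ 2) with hTB
  set φ : (Fin m × Fin n) → Option ℝ → ENNReal := fun p o =>
    o.elim 0 (fun z => ENNReal.ofReal ((z - (X p).getD 0) ^ 2)) with hφ
  set ψ : (Fin m × Fin n) → Option ℝ → ENNReal := fun p o =>
    o.elim 0 (fun z => ENNReal.ofReal ((Θ p - z) ^ 2)) with hψ
  have hφm : ∀ p, Measurable (φ p) := fun p =>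
    measurable_optElim 0 (((measurable_id.sub_const _).pow_const 2).ennreal_ofReal)
  have hψm : ∀ p, Measurable (ψ p) := fun p =>
    measurable_optElim 0 (((measurable_const.sub measurable_id).pow_const 2).ennreal_ofReal)
  set fA : (Fin m × Fin n → Option ℝ) → ENNReal := fun Z => ∑ p ∈ suppOf X, φ p (Z p) with hfA
  set fB : (Fin m × Fin n → Option ℝ) → ENNReal :=
    fun Z => ∑ p ∈ (suppOf X)ᶜ, ψ p (Z p) with hfB
  have hfAm : Measurable fA :=
    Finset.measurable_sum _ fun p _ => (hφm p).comp (measurable_pi_apply p)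
  have hfBm : Measurable fB :=
    Finset.measurable_sum _ fun p _ => (hψm p).comp (measurable_pi_apply p)
  have hEexp : (0:ℝ) < Real.exp (ε / 2) + 1 := by positivity
  have hq1le : ENNReal.ofReal (Real.exp (ε / 2) / (Real.exp (ε / 2) + 1)) ≤ 1 :=
    ENNReal.ofReal_le_one.mpr ((div_le_one hEexp).mpr (by linarith))
  -- lintegral bound for fA
  have hintA : ∫⁻ Z, fA Z ∂μ ≤ (s : ENNReal) * ENNReal.ofReal (8 / ε ^ 2) := by
    have hsum : ∫⁻ Z, fA Z ∂μ = ∑ p ∈ suppOf X, ∫⁻ Z, φ p (Z p) ∂μ := by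
      rw [hfA]
      exact lintegral_finset_sum _ fun p _ => (hφm p).comp (measurable_pi_apply p)
    rw [hsum]
    have hterm : ∀ p ∈ suppOf X, ∫⁻ Z, φ p (Z p) ∂μ ≤ ENNReal.ofReal (8 / ε ^ 2) := by
      intro p hp
      have hXp : (X p).isSome := (Finset.mem_filter.mp hp).2
      obtain ⟨r, hr⟩ := Option.isSome_iff_exists.mp hXp
      rw [hμpi, lintegral_eval_pi (fun p => modLaplace ε (X p)) p (hφm p), hr,
        modLaplace_lintegral_some hε r (hφm p)]
      have hφnone : φ p none = 0 := rfl
      have hφsome : ∀ z : ℝ, φ p (some z) = ENNReal.ofReal ((r - z) ^ 2) := fun z => by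
        simp only [hφ, Option.elim_some, hr, Option.getD_some]
        rw [show (z - r) ^ 2 = (r - z) ^ 2 by ring]
      simp_rw [hφsome]
      rw [lap_lintegral_sq hε r r, hφnone, mul_zero, add_zero, sub_self,
        zero_pow (by norm_num), zero_add]
      calc ENNReal.ofReal (Real.exp (ε / 2) / (Real.exp (ε / 2) + 1))
            * ENNReal.ofReal (8 / ε ^ 2)
          ≤ 1 * ENNReal.ofReal (8 / ε ^ 2) := mul_le_mul_left hq1le _
        _ = ENNReal.ofReal (8 / ε ^ 2) := one_mul _
    calc ∑ p ∈ suppOf X, ∫⁻ Z, φ p (Z p) ∂μ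
        ≤ ∑ _p ∈ suppOf X, ENNReal.ofReal (8 / ε ^ 2) := Finset.sum_le_sum hterm
      _ = (s : ENNReal) * ENNReal.ofReal (8 / ε ^ 2) := by
          rw [Finset.sum_const, nsmul_eq_mul]
  -- lintegral bound for fB
  have hintB : ∫⁻ Z, fB Z ∂μ ≤ ((m * n : ℕ) : ENNReal)
      * ENNReal.ofReal (1 / (Real.exp (ε / 2) + 1) * (1 + 8 / ε ^ 2)) := by
    have hsum : ∫⁻ Z, fB Z ∂μ = ∑ p ∈ (suppOf X)ᶜ, ∫⁻ Z, ψ p (Z p) ∂μ := by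
      rw [hfB]
      exact lintegral_finset_sum _ fun p _ => (hψm p).comp (measurable_pi_apply p)
    rw [hsum]
    have hterm : ∀ p ∈ (suppOf X)ᶜ, ∫⁻ Z, ψ p (Z p) ∂μ
        ≤ ENNReal.ofReal (1 / (Real.exp (ε / 2) + 1) * (1 + 8 / ε ^ 2)) := by
      intro p hp
      have hXp : X p = none := by
        have : ¬ (X p).isSome := by
          intro hcon
          exact (Finset.mem_compl.mp hp) (Finset.mem_filter.mpr ⟨Finset.mem_univ p, hcon⟩)
        exact Option.not_isSome_iff_eq_none.mp this
      rw [hμpi, lintegral_eval_pi (fun p => modLaplace ε (X p)) p (hψm p), hXp,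
        modLaplace_lintegral_none hε (hψm p)]
      have hψnone : ψ p none = 0 := rfl
      have hψsome : ∀ z : ℝ, ψ p (some z) = ENNReal.ofReal ((Θ p - z) ^ 2) := fun z => by
        simp only [hψ, Option.elim_some]
      simp_rw [hψsome]
      rw [lap_lintegral_sq hε 0 (Θ p), hψnone, mul_zero, zero_add, sub_zero]
      rw [← ENNReal.ofReal_mul (by positivity)]
      refine ENNReal.ofReal_le_ofReal ?_
      have hΘ2 : (Θ p) ^ 2 ≤ 1 := by
        obtain ⟨h1, h2⟩ := hΘ p
        nlinarith
      have h8 : (0:ℝ) ≤ 8 / ε ^ 2 := by positivity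
      have : (0:ℝ) ≤ 1 / (Real.exp (ε / 2) + 1) := by positivity
      nlinarith
    calc ∑ p ∈ (suppOf X)ᶜ, ∫⁻ Z, ψ p (Z p) ∂μ
        ≤ ∑ _p ∈ (suppOf X)ᶜ, ENNReal.ofReal (1 / (Real.exp (ε / 2) + 1) * (1 + 8 / ε ^ 2)) :=
          Finset.sum_le_sum hterm
      _ = ((suppOf X)ᶜ.card : ENNReal)
          * ENNReal.ofReal (1 / (Real.exp (ε / 2) + 1) * (1 + 8 / ε ^ 2)) := by
          rw [Finset.sum_const, nsmul_eq_mul]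
      _ ≤ ((m * n : ℕ) : ENNReal)
          * ENNReal.ofReal (1 / (Real.exp (ε / 2) + 1) * (1 + 8 / ε ^ 2)) := by
          refine mul_le_mul_left ?_ _
          refine Nat.cast_le.mpr ?_
          calc (suppOf X)ᶜ.card ≤ (Finset.univ : Finset (Fin m × Fin n)).card :=
                Finset.card_le_card (Finset.subset_univ _)
            _ = m * n := by simp [Finset.card_univ]
  -- Markov for A
  have hEA : μ {Z | ¬ fA Z ≤ ENNReal.ofReal TA} ≤ ENNReal.ofReal (γ / 2) := by
    rcases Nat.eq_zero_or_pos s with hs0 | hs0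
    · have hempty : {Z : Fin m × Fin n → Option ℝ | ¬ fA Z ≤ ENNReal.ofReal TA} = ∅ := by
        ext Z
        simp only [Set.mem_setOf_eq, Set.mem_empty_iff_false, iff_false, not_not]
        have : suppOf X = ∅ := Finset.card_eq_zero.mp hs0
        simp [hfA, this]
      rw [hempty, measure_empty]
      exact zero_le
    · have hspos : (0:ℝ) < s := by exact_mod_cast hs0
      have hTApos : 0 < TA := by rw [hTA]; positivity
      calc μ {Z | ¬ fA Z ≤ ENNReal.ofReal TA}
          ≤ μ {Z | ENNReal.ofReal TA ≤ fA Z} :=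
            measure_mono (fun Z hZ => le_of_lt (lt_of_not_ge hZ))
        _ ≤ (∫⁻ Z, fA Z ∂μ) / ENNReal.ofReal TA :=
            meas_ge_le_lintegral_div hfAm.aemeasurable
              (ne_of_gt (ENNReal.ofReal_pos.mpr hTApos)) ENNReal.ofReal_ne_top
        _ ≤ ((s : ENNReal) * ENNReal.ofReal (8 / ε ^ 2)) / ENNReal.ofReal TA :=
            ENNReal.div_le_div_right hintA _
        _ = ENNReal.ofReal ((s * (8 / ε ^ 2)) / TA) := by
            rw [ENNReal.ofReal_div_of_pos hTApos, ENNReal.ofReal_mul (le_of_lt hspos),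
              ENNReal.ofReal_natCast]
        _ = ENNReal.ofReal (γ / 2) := by
            congr 1
            rw [hTA]
            field_simp
            ring
  -- Markov for B
  have hEB : μ {Z | ¬ fB Z ≤ ENNReal.ofReal TB} ≤ ENNReal.ofReal (γ / 2) := by
    rcases Nat.eq_zero_or_pos (m * n) with hmn0 | hmn0
    · haveI : IsEmpty (Fin m × Fin n) := by
        rw [← Fintype.card_eq_zero_iff]
        simp [hmn0]
      have hempty : {Z : Fin m × Fin n → Option ℝ | ¬ fB Z ≤ ENNReal.ofReal TB} = ∅ := by
        ext Z
        simp only [Set.mem_setOf_eq, Set.mem_empty_iff_false, iff_false, not_not]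
        have : (suppOf X)ᶜ = ∅ := by
          ext p
          exact (IsEmpty.false p).elim
        simp [hfB, this]
      rw [hempty, measure_empty]
      exact zero_le
    · have hmnpos : (0:ℝ) < (m * n : ℕ) := by exact_mod_cast hmn0
      have hmnpos' : (0:ℝ) < (m : ℝ) * n := by push_cast at hmnpos ⊢; linarith
      have hTBpos : 0 < TB := by rw [hTB]; positivity
      calc μ {Z | ¬ fB Z ≤ ENNReal.ofReal TB}
          ≤ μ {Z | ENNReal.ofReal TB ≤ fB Z} :=
            measure_mono (fun Z hZ => le_of_lt (lt_of_not_ge hZ))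
        _ ≤ (∫⁻ Z, fB Z ∂μ) / ENNReal.ofReal TB :=
            meas_ge_le_lintegral_div hfBm.aemeasurable
              (ne_of_gt (ENNReal.ofReal_pos.mpr hTBpos)) ENNReal.ofReal_ne_top
        _ ≤ (((m * n : ℕ) : ENNReal)
              * ENNReal.ofReal (1 / (Real.exp (ε / 2) + 1) * (1 + 8 / ε ^ 2)))
              / ENNReal.ofReal TB :=
            ENNReal.div_le_div_right hintB _
        _ = ENNReal.ofReal (((m * n : ℕ) * (1 / (Real.exp (ε / 2) + 1) * (1 + 8 / ε ^ 2))) / TB)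
            := by
            rw [ENNReal.ofReal_div_of_pos hTBpos, ENNReal.ofReal_mul (le_of_lt hmnpos),
              ENNReal.ofReal_natCast]
        _ = ENNReal.ofReal (γ / 2) := by
            congr 1
            rw [hTB]
            push_cast
            rw [div_eq_div_iff (by positivity) (by norm_num)]
            field_simp
  -- combine
  set G := {Z : Fin m × Fin n → Option ℝ | fA Z ≤ ENNReal.ofReal TA}
      ∩ {Z | fB Z ≤ ENNReal.ofReal TB} with hG
  have hGbound : ENNReal.ofReal (1 - γ) ≤ μ G := by
    have hcompl : μ Gᶜ ≤ ENNReal.ofReal γ := by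
      have hGc : Gᶜ = {Z : Fin m × Fin n → Option ℝ | ¬ fA Z ≤ ENNReal.ofReal TA}
          ∪ {Z | ¬ fB Z ≤ ENNReal.ofReal TB} := by
        rw [hG, Set.compl_inter, Set.compl_setOf, Set.compl_setOf]
      rw [hGc]
      calc μ _ ≤ μ {Z : Fin m × Fin n → Option ℝ | ¬ fA Z ≤ ENNReal.ofReal TA}
            + μ {Z | ¬ fB Z ≤ ENNReal.ofReal TB} := measure_union_le _ _
        _ ≤ ENNReal.ofReal (γ / 2) + ENNReal.ofReal (γ / 2) := add_le_add hEA hEB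
        _ = ENNReal.ofReal γ := by
            rw [← ENNReal.ofReal_add (by positivity) (by positivity)]
            norm_num
    have huniv : (1 : ENNReal) ≤ μ G + ENNReal.ofReal γ := by
      calc (1 : ENNReal) = μ Set.univ := measure_univ.symm
        _ ≤ μ (G ∪ Gᶜ) := by rw [Set.union_compl_self]
        _ ≤ μ G + μ Gᶜ := measure_union_le _ _
        _ ≤ μ G + ENNReal.ofReal γ := add_le_add le_rfl hcompl
    calc ENNReal.ofReal (1 - γ) = 1 - ENNReal.ofReal γ := by
          rw [ENNReal.ofReal_sub _ (le_of_lt hγ0), ENNReal.ofReal_one]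
      _ ≤ μ G := tsub_le_iff_right.mpr huniv
  refine le_trans hGbound (measure_mono ?_)
  -- deterministic part
  rintro Z ⟨hZA, hZB⟩
  simp only [Set.mem_setOf_eq] at hZA hZB ⊢
  have hTAnn : 0 ≤ TA := by rw [hTA]; positivity
  have hTBnn : 0 ≤ TB := by rw [hTB]; positivity
  set S := suppOf Z ∩ suppOf X with hS
  set T := suppOf Z \ suppOf X with hT
  have hZsome : ∀ p ∈ suppOf Z, ∃ z : ℝ, Z p = some z := fun p hp =>
    Option.isSome_iff_exists.mp (Finset.mem_filter.mp hp).2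
  -- real bound from hZA
  have hSA : (∑ p ∈ S, ((Z p).getD 0 - (X p).getD 0) ^ 2) ≤ TA := by
    refine (ENNReal.ofReal_le_ofReal_iff hTAnn).mp ?_
    rw [ENNReal.ofReal_sum_of_nonneg (fun p _ => sq_nonneg _)]
    refine le_trans ?_ hZA
    rw [hfA]
    refine le_trans (le_of_eq (Finset.sum_congr rfl fun p hp => ?_))
      (Finset.sum_le_sum_of_subset (Finset.inter_subset_right))
    obtain ⟨z, hz⟩ := hZsome p (Finset.mem_inter.mp hp).1
    simp [hφ, hz]
  have hTB' : (∑ p ∈ T, (Θ p - (Z p).getD 0) ^ 2) ≤ TB := by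
    refine (ENNReal.ofReal_le_ofReal_iff hTBnn).mp ?_
    rw [ENNReal.ofReal_sum_of_nonneg (fun p _ => sq_nonneg _)]
    refine le_trans ?_ hZB
    rw [hfB]
    refine le_trans (le_of_eq (Finset.sum_congr rfl fun p hp => ?_))
      (Finset.sum_le_sum_of_subset ?_)
    · obtain ⟨z, hz⟩ := hZsome p (Finset.mem_sdiff.mp hp).1
      simp [hψ, hz]
    · intro p hp
      exact Finset.mem_compl.mpr (Finset.mem_sdiff.mp hp).2
  -- split the sum
  have hsplit : (∑ p ∈ suppOf Z, (Θ p - (Z p).getD 0) ^ 2)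
      = (∑ p ∈ T, (Θ p - (Z p).getD 0) ^ 2) + (∑ p ∈ S, (Θ p - (Z p).getD 0) ^ 2) := by
    rw [← Finset.sum_union (Finset.disjoint_sdiff_inter _ _), Finset.sdiff_union_inter]
  have hnnT : 0 ≤ ∑ p ∈ T, (Θ p - (Z p).getD 0) ^ 2 :=
    Finset.sum_nonneg fun p _ => sq_nonneg _
  have hnnS : 0 ≤ ∑ p ∈ S, (Θ p - (Z p).getD 0) ^ 2 :=
    Finset.sum_nonneg fun p _ => sq_nonneg _
  have step1 : Real.sqrt (∑ p ∈ suppOf Z, (Θ p - (Z p).getD 0) ^ 2)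
      ≤ Real.sqrt (∑ p ∈ T, (Θ p - (Z p).getD 0) ^ 2)
        + Real.sqrt (∑ p ∈ S, (Θ p - (Z p).getD 0) ^ 2) := by
    rw [hsplit]
    exact sqrt_add_le'' hnnT hnnS
  -- bound on S part via Minkowski
  have stepS : Real.sqrt (∑ p ∈ S, (Θ p - (Z p).getD 0) ^ 2)
      ≤ ρ₀ * Real.sqrt s + 4 / ε * Real.sqrt (s / γ) := by
    have hmink := minkowski_finset S (fun p => Θ p - (X p).getD 0)
      (fun p => (X p).getD 0 - (Z p).getD 0)
    have heq : (∑ p ∈ S, (Θ p - (X p).getD 0 + ((X p).getD 0 - (Z p).getD 0)) ^ 2)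
        = ∑ p ∈ S, (Θ p - (Z p).getD 0) ^ 2 :=
      Finset.sum_congr rfl fun p _ => by ring
    rw [heq] at hmink
    have hb1 : Real.sqrt (∑ p ∈ S, (Θ p - (X p).getD 0) ^ 2) ≤ ρ₀ * Real.sqrt s := by
      refine le_trans (Real.sqrt_le_sqrt ?_) hclose
      exact Finset.sum_le_sum_of_subset_of_nonneg (Finset.inter_subset_right)
        (fun p _ _ => sq_nonneg _)
    have hb2 : Real.sqrt (∑ p ∈ S, ((X p).getD 0 - (Z p).getD 0) ^ 2)
        ≤ 4 / ε * Real.sqrt (s / γ) := by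
      have heq2 : (∑ p ∈ S, ((X p).getD 0 - (Z p).getD 0) ^ 2)
          = ∑ p ∈ S, ((Z p).getD 0 - (X p).getD 0) ^ 2 :=
        Finset.sum_congr rfl fun p _ => by ring
      rw [heq2]
      refine le_trans (Real.sqrt_le_sqrt hSA) ?_
      have : TA = (4 / ε) ^ 2 * (s / γ) := by
        rw [hTA, div_pow, div_mul_div_comm]
        norm_num
      rw [this, Real.sqrt_mul (sq_nonneg _), Real.sqrt_sq (by positivity)]
    linarith
  -- bound on T part
  have stepT : Real.sqrt (∑ p ∈ T, (Θ p - (Z p).getD 0) ^ 2) ≤ Real.sqrt TB :=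
    Real.sqrt_le_sqrt hTB'
  have := step1
  rw [hTB] at stepT
  linarith
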